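/- arXiv:2410.14427 — 2 statements merged into one kernel-verified Lean document; each statement's English description precedes it below -/
import Mathlib

section
/- For real t and an integer M ≥ 2, the truncated Fourier series of the sawtooth function satisfies: ψ(t) - Σ_{0<|m|≤M} e(-mt)/(2πim) ≪ min{1, 1/(M·‖t‖)}, where ψ(t) = t - ⌊t⌋ - 1/2, e(x) = e^{2πix}, and ‖t‖ is the distance from t to the nearest integer. -/
open Real Finset intervalIntegral

noncomputable def sawF (M : ℕ) (u : ℝ) : ℝ :=
  (u - 1/2) + ∑ k ∈ Finset.range M, Real.sin (2*π*(k+1)*u) / (π*(k+1))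

noncomputable def sawD (M : ℕ) (u : ℝ) : ℝ :=
  1 + ∑ k ∈ Finset.range M, 2 * Real.cos (2*π*(k+1)*u)

lemma sawF_hasDeriv (M : ℕ) (u : ℝ) : HasDerivAt (sawF M) (sawD M u) u := by
  unfold sawF sawD
  have h1 : HasDerivAt (fun u : ℝ => u - 1/2) 1 u := (hasDerivAt_id u).sub_const _
  have h2 : ∀ k ∈ Finset.range M, HasDerivAt
      (fun u : ℝ => Real.sin (2*π*(k+1)*u) / (π*(k+1)))
      (2 * Real.cos (2*π*((k:ℝ)+1)*u)) u := by
    intro k _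
    have hl : HasDerivAt (fun u : ℝ => 2*π*((k:ℝ)+1)*u) (2*π*((k:ℝ)+1)) u := by
      simpa using (hasDerivAt_id u).const_mul (2*π*((k:ℝ)+1))
    have := (hl.sin).div_const (π*((k:ℝ)+1))
    refine this.congr_deriv ?_
    have hk : (π*((k:ℝ)+1)) ≠ 0 := by positivity
    field_simp
  have h3 := h1.add (HasDerivAt.fun_sum h2)
  exact h3

lemma sawF_half (M : ℕ) : sawF M (1/2) = 0 := by
  unfold sawF
  rw [Finset.sum_eq_zero]
  · ring
  intro k _
  have : 2*π*((k:ℝ)+1)*(1/2) = (k+1 : ℕ) * π := by push_cast; ring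
  rw [this, Real.sin_nat_mul_pi, zero_div]

lemma dirichlet (M : ℕ) (u : ℝ) :
    Real.sin (π*u) * sawD M u = Real.sin ((2*M+1)*(π*u)) := by
  have key : ∀ k : ℕ, Real.sin ((2*((k:ℝ)+1)+1)*(π*u)) - Real.sin ((2*(k:ℝ)+1)*(π*u))
      = Real.sin (π*u) * (2 * Real.cos (2*π*((k:ℝ)+1)*u)) := by
    intro k
    have e1 : (2*((k:ℝ)+1)+1)*(π*u) = 2*π*((k:ℝ)+1)*u + π*u := by ring
    have e2 : (2*(k:ℝ)+1)*(π*u) = 2*π*((k:ℝ)+1)*u - π*u := by ring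
    rw [e1, e2, Real.sin_add, Real.sin_sub]
    ring
  have tel := Finset.sum_range_sub (fun k => Real.sin ((2*(k:ℝ)+1)*(π*u))) M
  push_cast at tel
  simp only [key] at tel
  unfold sawD
  rw [mul_add, mul_one, Finset.mul_sum, tel]
  norm_num

lemma sawD_continuous (M : ℕ) : Continuous (sawD M) := by
  unfold sawD
  fun_prop

lemma sawF_eq_integral (M : ℕ) (t : ℝ) :
    sawF M t = ∫ u in (1/2 : ℝ)..t, sawD M u := by
  rw [intervalIntegral.integral_eq_sub_of_hasDerivAt (fun x _ => sawF_hasDeriv M x)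
    (((sawD_continuous M).intervalIntegrable _ _)), sawF_half, sub_zero]

set_option maxHeartbeats 2000000 in
lemma sawF_core (M : ℕ) (hM : 1 ≤ M) {t : ℝ} (ht : 0 < t) (ht' : t ≤ 1/2) :
    |sawF M t| ≤ 1 / (M * t) := by
  set N : ℝ := (2*(M:ℝ)+1)*π with hNdef
  have hπ := Real.pi_pos
  have hπ3 := Real.pi_gt_three
  have hN : 0 < N := by positivity
  have huIcc : Set.uIcc (1/2 : ℝ) t = Set.Icc t (1/2) := Set.uIcc_of_ge ht'
  have huIcc' : Set.uIcc t (1/2 : ℝ) = Set.Icc t (1/2) := Set.uIcc_of_le ht'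
  have hsin : ∀ x ∈ Set.Icc t (1/2 : ℝ), 0 < Real.sin (π*x) := by
    intro x hx
    apply Real.sin_pos_of_pos_of_lt_pi
    · nlinarith [hx.1]
    · nlinarith [hx.2]
  have hcos : ∀ x ∈ Set.Icc t (1/2 : ℝ), 0 ≤ Real.cos (π*x) := by
    intro x hx
    apply Real.cos_nonneg_of_mem_Icc
    constructor
    · nlinarith [hx.1]
    · nlinarith [hx.2]
  -- rewrite the integral
  have hcongr : ∫ u in (1/2 : ℝ)..t, sawD M u
      = ∫ x in (1/2 : ℝ)..t, (Real.sin (π*x))⁻¹ * Real.sin (N*x) := by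
    apply intervalIntegral.integral_congr
    intro x hx
    rw [huIcc] at hx
    have h1 := hsin x hx
    have h2 : Real.sin (N*x) = Real.sin (π*x) * sawD M x := by
      rw [dirichlet M x]
      congr 1
      push_cast
      ring
    show sawD M x = (Real.sin (π*x))⁻¹ * Real.sin (N*x)
    rw [h2]
    field_simp
  -- integration by parts
  have hu : ∀ x ∈ Set.uIcc (1/2 : ℝ) t,
      HasDerivAt (fun x => (Real.sin (π*x))⁻¹)
        (-(Real.cos (π*x) * π) / (Real.sin (π*x))^2) x := by
    intro x hx
    rw [huIcc] at hx
    exact ((((hasDerivAt_id x).const_mul π).sin).inv (ne_of_gt (hsin x hx))).congr_deriv (by simp)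
  have hv : ∀ x ∈ Set.uIcc (1/2 : ℝ) t,
      HasDerivAt (fun x => -(Real.cos (N*x))/N) (Real.sin (N*x)) x := by
    intro x _
    have h0 := (((hasDerivAt_id x).const_mul N).cos).neg.div_const N
    refine h0.congr_deriv ?_
    field_simp; rfl
  have hu'cont : ContinuousOn (fun x => -(Real.cos (π*x) * π) / (Real.sin (π*x))^2)
      (Set.Icc t (1/2 : ℝ)) := by
    apply ContinuousOn.div
    · fun_prop
    · fun_prop
    · intro x hx
      exact pow_ne_zero _ (ne_of_gt (hsin x hx))
  have hibp := intervalIntegral.integral_mul_deriv_eq_deriv_mul hu hv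
    ((huIcc ▸ hu'cont).intervalIntegrable)
    ((Continuous.intervalIntegrable (by fun_prop) _ _))
  -- bound for sin(π t)
  have h2t : 2*t ≤ Real.sin (π*t) := by
    have := Real.mul_le_sin (x := π*t) (by positivity) (by nlinarith)
    calc 2*t = 2/π*(π*t) := by field_simp
      _ ≤ _ := this
  have hsint : 0 < Real.sin (π*t) := hsin t ⟨le_refl t, ht'⟩
  have hinv : (Real.sin (π*t))⁻¹ ≤ (2*t)⁻¹ := inv_anti₀ (by positivity) h2t
  -- boundary terms
  have hb1 : |(Real.sin (π*t))⁻¹ * (-(Real.cos (N*t))/N)| ≤ 1/(2*t*N) := by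
    rw [abs_mul, abs_inv, abs_of_pos hsint, abs_div, abs_neg, abs_of_pos hN]
    calc (Real.sin (π*t))⁻¹ * (|Real.cos (N*t)|/N) ≤ (2*t)⁻¹ * (1/N) := by
          apply mul_le_mul hinv ?_ (by positivity) (by positivity)
          gcongr
          exact Real.abs_cos_le_one _
      _ = 1/(2*t*N) := by field_simp
  have hb2 : |(Real.sin (π*(1/2:ℝ)))⁻¹ * (-(Real.cos (N*(1/2:ℝ)))/N)| ≤ 1/(2*t*N) := by
    have hhalf : Real.sin (π*(1/2:ℝ)) = 1 := by
      rw [show π*(1/2:ℝ) = π/2 by ring, Real.sin_pi_div_two]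
    rw [hhalf, abs_mul, abs_div, abs_neg, abs_of_pos hN]
    simp only [inv_one, abs_one, one_mul]
    calc |Real.cos (N*(1/2:ℝ))|/N ≤ 1/N := by
          gcongr; exact Real.abs_cos_le_one _
      _ ≤ 1/(2*t*N) := by
          rw [div_le_div_iff₀ hN (by positivity)]
          nlinarith
  -- bound the remaining integral
  have hA : ∀ x ∈ Set.uIcc t (1/2 : ℝ),
      HasDerivAt (fun x => -(π⁻¹ * (Real.sin (π*x))⁻¹))
        (Real.cos (π*x) / (Real.sin (π*x))^2) x := by
    intro x hx
    rw [huIcc'] at hx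
    have h0 := ((hu x (by rwa [huIcc])).const_mul π⁻¹).neg
    refine h0.congr_deriv ?_
    have := ne_of_gt (hsin x hx)
    field_simp
  have hftc : ∫ x in t..(1/2:ℝ), Real.cos (π*x) / (Real.sin (π*x))^2
      = π⁻¹ * (Real.sin (π*t))⁻¹ - π⁻¹ := by
    rw [intervalIntegral.integral_eq_sub_of_hasDerivAt hA ?_]
    · rw [show π*(1/2:ℝ) = π/2 by ring, Real.sin_pi_div_two]
      ring
    · apply ContinuousOn.intervalIntegrable
      rw [huIcc']
      apply ContinuousOn.div (by fun_prop) (by fun_prop)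
      intro x hx
      exact pow_ne_zero _ (ne_of_gt (hsin x hx))
  have hprod_cont : ContinuousOn
      (fun x => -(Real.cos (π*x) * π) / (Real.sin (π*x))^2 * (-(Real.cos (N*x))/N))
      (Set.Icc t (1/2 : ℝ)) := hu'cont.mul (by fun_prop)
  have hi2 : |∫ x in (1/2:ℝ)..t,
      -(Real.cos (π*x) * π) / (Real.sin (π*x))^2 * (-(Real.cos (N*x))/N)| ≤ 1/(2*t*N) := by
    rw [intervalIntegral.integral_symm, abs_neg]
    calc |∫ x in t..(1/2:ℝ), -(Real.cos (π*x) * π) / (Real.sin (π*x))^2 * (-(Real.cos (N*x))/N)|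
        ≤ ∫ x in t..(1/2:ℝ), |(-(Real.cos (π*x) * π) / (Real.sin (π*x))^2 * (-(Real.cos (N*x))/N))| :=
          intervalIntegral.abs_integral_le_integral_abs ht'
      _ ≤ ∫ x in t..(1/2:ℝ), (π/N) * (Real.cos (π*x) / (Real.sin (π*x))^2) := by
          apply intervalIntegral.integral_mono_on ht'
          · exact ((huIcc' ▸ hprod_cont).intervalIntegrable).abs
          · apply ContinuousOn.intervalIntegrable
            rw [huIcc']
            apply ContinuousOn.mul continuousOn_const
            apply ContinuousOn.div (by fun_prop) (by fun_prop)
            intro x hx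
            exact pow_ne_zero _ (ne_of_gt (hsin x hx))
          · intro x hx
            have h1 := hsin x hx
            have h2 := hcos x hx
            rw [abs_mul, abs_div, abs_neg, abs_div, abs_neg, abs_mul,
              abs_of_nonneg h2, abs_of_pos hπ, abs_of_pos hN,
              abs_of_pos (pow_pos h1 2)]
            rw [div_mul_div_comm]
            rw [div_le_iff₀ (by positivity)]
            have hc1 : |Real.cos (N*x)| ≤ 1 := Real.abs_cos_le_one _
            have h1' : 0 < (Real.sin (π*x))^2 := pow_pos h1 2
            calc Real.cos (π*x) * π * |Real.cos (N*x)|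
                ≤ Real.cos (π*x) * π * 1 := by
                  apply mul_le_mul_of_nonneg_left hc1 (by positivity)
              _ = π/N * (Real.cos (π*x) / (Real.sin (π*x))^2) * ((Real.sin (π*x))^2 * N) := by
                  field_simp
      _ = (π/N) * (π⁻¹ * (Real.sin (π*t))⁻¹ - π⁻¹) := by
          rw [intervalIntegral.integral_const_mul, hftc]
      _ ≤ 1/(2*t*N) := by
          have : (π/N) * (π⁻¹ * (Real.sin (π*t))⁻¹ - π⁻¹) ≤ (π/N) * (π⁻¹ * (2*t)⁻¹) := by
            apply mul_le_mul_of_nonneg_left ?_ (by positivity)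
            have : π⁻¹ * (Real.sin (π*t))⁻¹ ≤ π⁻¹ * (2*t)⁻¹ :=
              mul_le_mul_of_nonneg_left hinv (by positivity)
            have hπi : (0:ℝ) < π⁻¹ := by positivity
            linarith
          calc (π/N) * (π⁻¹ * (Real.sin (π*t))⁻¹ - π⁻¹) ≤ (π/N) * (π⁻¹ * (2*t)⁻¹) := this
            _ = 1/(2*t*N) := by field_simp
  -- put everything together
  have habs : |sawF M t| ≤ 3/(2*t*N) := by
    rw [sawF_eq_integral, hcongr, hibp]
    have := abs_sub (G := ℝ)
    calc |(Real.sin (π*t))⁻¹ * (-(Real.cos (N*t))/N)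
          - (Real.sin (π*(1/2:ℝ)))⁻¹ * (-(Real.cos (N*(1/2:ℝ)))/N)
          - ∫ x in (1/2:ℝ)..t, -(Real.cos (π*x) * π) / (Real.sin (π*x))^2 * (-(Real.cos (N*x))/N)|
        ≤ |(Real.sin (π*t))⁻¹ * (-(Real.cos (N*t))/N)|
          + |(Real.sin (π*(1/2:ℝ)))⁻¹ * (-(Real.cos (N*(1/2:ℝ)))/N)|
          + |∫ x in (1/2:ℝ)..t, -(Real.cos (π*x) * π) / (Real.sin (π*x))^2 * (-(Real.cos (N*x))/N)| := by
          apply (abs_sub _ _).trans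
          gcongr
          exact abs_sub _ _
      _ ≤ 1/(2*t*N) + 1/(2*t*N) + 1/(2*t*N) := by gcongr
      _ = 3/(2*t*N) := by ring
  refine habs.trans ?_
  rw [div_le_div_iff₀ (by positivity) (by positivity)]
  have hM1 : (1:ℝ) ≤ (M:ℝ) := by exact_mod_cast hM
  have : N = (2*(M:ℝ)+1)*π := hNdef
  have key : 3*(M:ℝ) ≤ 2*N := by rw [this]; nlinarith
  nlinarith [mul_le_mul_of_nonneg_right key ht.le]

lemma sawF_small (M : ℕ) {t : ℝ} (ht : 0 ≤ t) (ht' : t ≤ 1/2) :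
    |sawF M t| ≤ 1/2 + 2*M*t := by
  unfold sawF
  calc |(t - 1/2) + ∑ k ∈ Finset.range M, Real.sin (2*π*(k+1)*t) / (π*(k+1))|
      ≤ |t - 1/2| + |∑ k ∈ Finset.range M, Real.sin (2*π*(k+1)*t) / (π*(k+1))| := abs_add_le _ _
    _ ≤ 1/2 + 2*M*t := by
        gcongr
        · rw [abs_sub_comm, abs_of_nonneg (by linarith)]; linarith
        · calc |∑ k ∈ Finset.range M, Real.sin (2*π*(k+1)*t) / (π*(k+1))|
              ≤ ∑ k ∈ Finset.range M, |Real.sin (2*π*(k+1)*t) / (π*(k+1))| :=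
                Finset.abs_sum_le_sum_abs _ _
            _ ≤ ∑ _k ∈ Finset.range M, 2*t := by
                apply Finset.sum_le_sum
                intro k _
                have hπ := Real.pi_pos
                have hd : (0:ℝ) < π*((k:ℝ)+1) := by positivity
                rw [abs_div, abs_of_pos hd, div_le_iff₀ hd]
                calc |Real.sin (2*π*((k:ℝ)+1)*t)| ≤ |2*π*((k:ℝ)+1)*t| := Real.abs_sin_le_abs
                  _ = 2*t*(π*((k:ℝ)+1)) := by rw [abs_of_nonneg (by positivity)]; ring
            _ = 2*M*t := by rw [Finset.sum_const, Finset.card_range]; push_cast; ring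

lemma sawF_sym (M : ℕ) (t : ℝ) : sawF M (1-t) = - sawF M t := by
  unfold sawF
  rw [neg_add, ← Finset.sum_neg_distrib]
  congr 1
  · ring
  · apply Finset.sum_congr rfl
    intro k _
    have e : 2*π*((k:ℝ)+1)*(1-t) = (k+1 : ℕ)*(2*π) - 2*π*((k:ℝ)+1)*t := by push_cast; ring
    rw [e, Real.sin_nat_mul_two_pi_sub, neg_div]

lemma sawF_zero (M : ℕ) : sawF M 0 = -(1/2) := by
  unfold sawF
  rw [Finset.sum_eq_zero]
  · ring
  intro k _
  norm_num

lemma sawF_bound (M : ℕ) (hM : 1 ≤ M) {x : ℝ} (hx0 : 0 < x) (hx1 : x < 1) :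
    |sawF M x| ≤ 3 * min 1 (1/(M * min x (1-x))) := by
  have key : ∀ y : ℝ, 0 < y → y ≤ 1/2 → |sawF M y| ≤ 3 * min 1 (1/(M * y)) := by
    intro y hy hy'
    have hM1 : (1:ℝ) ≤ (M:ℝ) := by exact_mod_cast hM
    rcases le_or_gt ((M:ℝ)*y) 1 with h | h
    · have hmin : min 1 (1/((M:ℝ)*y)) = 1 := by
        apply min_eq_left
        rw [le_div_iff₀ (by positivity)]
        linarith
      rw [hmin]
      have := sawF_small M hy.le hy'
      have : 2*(M:ℝ)*y ≤ 2 := by nlinarith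
      linarith [sawF_small M hy.le hy']
    · have hmin : min 1 (1/((M:ℝ)*y)) = 1/((M:ℝ)*y) := by
        apply min_eq_right
        rw [div_le_one (by positivity)]
        linarith
      rw [hmin]
      have := sawF_core M hM hy hy'
      have h0 : 0 ≤ 1/((M:ℝ)*y) := by positivity
      linarith
  rcases le_or_gt x (1/2) with h | h
  · have hmin : min x (1-x) = x := min_eq_left (by linarith)
    rw [hmin]
    exact key x hx0 h
  · have hmin : min x (1-x) = 1-x := min_eq_right (by linarith)
    rw [hmin]
    have h1 : |sawF M (1-x)| = |sawF M x| := by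
      rw [sawF_sym, abs_neg]
    rw [← h1]
    exact key (1-x) (by linarith) (by linarith)

lemma pair_term (k : ℕ) (t : ℝ) :
    Complex.exp (2 * Real.pi * Complex.I * (-((((k:ℤ)+1) : ℤ) : ℝ) * t)) / (2 * Real.pi * Complex.I * (((k:ℤ)+1 : ℤ) : ℂ))
    + Complex.exp (2 * Real.pi * Complex.I * (-(((-(k:ℤ)-1) : ℤ) : ℝ) * t)) / (2 * Real.pi * Complex.I * (((-(k:ℤ)-1) : ℤ) : ℂ))
    = -((Real.sin (2*π*(k+1)*t) / (π*(k+1)) : ℝ) : ℂ) := by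
  have hπ : (π:ℂ) ≠ 0 := Complex.ofReal_ne_zero.mpr Real.pi_ne_zero
  have hk : ((k:ℂ)+1) ≠ 0 := by
    exact_mod_cast Nat.cast_add_one_ne_zero (R := ℂ) k
  have ha1 : (2 * (π:ℂ) * Complex.I * (-((((k:ℤ)+1) : ℤ) : ℝ) * t : ℂ)) = ((-(2*π*((k:ℝ)+1)*t) : ℝ) : ℂ) * Complex.I := by
    push_cast
    ring
  have ha2 : (2 * (π:ℂ) * Complex.I * (-(((-(k:ℤ)-1) : ℤ) : ℝ) * t : ℂ)) = ((2*π*((k:ℝ)+1)*t : ℝ) : ℂ) * Complex.I := by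
    push_cast
    ring
  rw [ha1, ha2, Complex.exp_mul_I, Complex.exp_mul_I]
  rw [Complex.ofReal_neg, Complex.cos_neg, Complex.sin_neg]
  rw [← Complex.ofReal_sin, ← Complex.ofReal_cos]
  have h1 : (((k:ℤ)+1 : ℤ) : ℂ) = (k:ℂ)+1 := by push_cast; ring
  have h2 : ((-(k:ℤ)-1 : ℤ) : ℂ) = -((k:ℂ)+1) := by push_cast; ring
  rw [h1, h2]
  rw [Complex.ofReal_div]
  have hsc : ((π*((k:ℝ)+1) : ℝ) : ℂ) = (π:ℂ)*((k:ℂ)+1) := by push_cast; ring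
  rw [hsc]
  have hd : (2*(π:ℂ)*Complex.I*((k:ℂ)+1)) ≠ 0 := by
    simp [hπ, hk, Complex.I_ne_zero]
  have hd' : ((π:ℂ)*((k:ℂ)+1)) ≠ 0 := mul_ne_zero hπ hk
  rw [show 2 * (π:ℂ) * Complex.I * -((k:ℂ)+1) = -(2 * (π:ℂ) * Complex.I * ((k:ℂ)+1)) from by ring,
    div_neg, ← sub_eq_add_neg, div_sub_div_same, div_eq_iff hd]
  field_simp
  ring

lemma sum_pair (M : ℕ) (t : ℝ) :
    ∑ m ∈ (Finset.Icc (-(M : ℤ)) (M : ℤ)).filter (· ≠ 0),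
      Complex.exp (2 * Real.pi * Complex.I * (-(m : ℝ) * t)) / (2 * Real.pi * Complex.I * m)
    = -((∑ k ∈ Finset.range M, Real.sin (2*π*(k+1)*t) / (π*(k+1)) : ℝ) : ℂ) := by
  set f : ℤ → ℂ := fun m =>
    Complex.exp (2 * Real.pi * Complex.I * (-(m : ℝ) * t)) / (2 * Real.pi * Complex.I * m) with hf
  have hset : (Finset.Icc (-(M : ℤ)) (M : ℤ)).filter (· ≠ 0)
      = ((Finset.range M).image fun k : ℕ => (k:ℤ)+1) ∪ ((Finset.range M).image fun k : ℕ => -(k:ℤ)-1) := by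
    ext m
    simp only [Finset.mem_filter, Finset.mem_Icc, Finset.mem_union, Finset.mem_image,
      Finset.mem_range, ne_eq]
    constructor
    · rintro ⟨⟨h1, h2⟩, h3⟩
      rcases le_or_gt 1 m with hm | hm
      · exact Or.inl ⟨(m-1).toNat, by omega, by omega⟩
      · exact Or.inr ⟨(-m-1).toNat, by omega, by omega⟩
    · rintro (⟨k, hk, rfl⟩ | ⟨k, hk, rfl⟩) <;> refine ⟨⟨by omega, by omega⟩, by omega⟩
  have hdisj : Disjoint ((Finset.range M).image fun k : ℕ => (k:ℤ)+1)
      ((Finset.range M).image fun k : ℕ => -(k:ℤ)-1) := by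
    rw [Finset.disjoint_left]
    simp only [Finset.mem_image, Finset.mem_range]
    rintro a ⟨k, hk, rfl⟩ ⟨l, hl, hl2⟩
    omega
  rw [hset, Finset.sum_union hdisj,
    Finset.sum_image (by intro a _ b _ h; simp only at h; omega),
    Finset.sum_image (by intro a _ b _ h; simp only at h; omega),
    ← Finset.sum_add_distrib]
  rw [Complex.ofReal_sum, ← Finset.sum_neg_distrib]
  apply Finset.sum_congr rfl
  intro k _
  exact pair_term k t

open Classical in
theorem sawtooth_fourier_approx :
    ∃ C > 0, ∀ (t : ℝ) (M : ℕ), 2 ≤ M →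
      ‖((t - ⌊t⌋ - 1 / 2 : ℝ) : ℂ) -
          ∑ m ∈ (Finset.Icc (-(M : ℤ)) (M : ℤ)).filter (· ≠ 0),
            Complex.exp (2 * Real.pi * Complex.I * (-(m : ℝ) * t)) / (2 * Real.pi * Complex.I * m)‖
        ≤ C * (if |t - round t| = 0 then 1
               else min 1 (1 / ((M : ℝ) * |t - round t|))) := by
  refine ⟨3, by norm_num, ?_⟩
  intro t M hM
  have hM1 : 1 ≤ M := le_trans (by norm_num) hM
  set x : ℝ := Int.fract t with hx
  have hx0 : 0 ≤ x := Int.fract_nonneg t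
  have hx1 : x < 1 := Int.fract_lt_one t
  have hxt : x = t - ⌊t⌋ := rfl
  have hS : (∑ k ∈ Finset.range M, Real.sin (2*π*(k+1)*t) / (π*(k+1)))
      = ∑ k ∈ Finset.range M, Real.sin (2*π*(k+1)*x) / (π*(k+1)) := by
    apply Finset.sum_congr rfl
    intro k _
    congr 1
    have e : 2*π*((k:ℝ)+1)*t = 2*π*((k:ℝ)+1)*x + ((((k:ℤ)+1)*⌊t⌋ : ℤ) : ℝ)*(2*π) := by
      rw [hxt]; push_cast; ring
    rw [e, Real.sin_add_int_mul_two_pi]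
  have hLHS : ((t - ⌊t⌋ - 1/2 : ℝ) : ℂ) -
      (∑ m ∈ (Finset.Icc (-(M : ℤ)) (M : ℤ)).filter (· ≠ 0),
        Complex.exp (2 * Real.pi * Complex.I * (-(m : ℝ) * t)) / (2 * Real.pi * Complex.I * m))
      = ((sawF M x : ℝ) : ℂ) := by
    rw [sum_pair, hS, sub_neg_eq_add, ← Complex.ofReal_add]
    congr 1
  rw [hLHS, Complex.norm_real, Real.norm_eq_abs]
  have hround : t - round t = x - round x := by
    have h1 : round t = round x + ⌊t⌋ := by
      conv_lhs => rw [show t = x + ⌊t⌋ by rw [hxt]; ring]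
      exact round_add_intCast x ⌊t⌋
    rw [h1, hxt]
    push_cast
    ring
  rcases eq_or_lt_of_le hx0 with h0 | h0
  · -- x = 0
    have hz : t - round t = 0 := by
      rw [hround, ← h0]
      norm_num
    rw [hz, abs_zero, if_pos rfl, ← h0, sawF_zero]
    rw [abs_neg, abs_of_nonneg (by norm_num : (0:ℝ) ≤ 1/2)]
    norm_num
  · -- 0 < x
    have hxr : |x - round x| = min x (1-x) := by
      rcases lt_or_ge x (1/2) with h | h
      · have hr0 : round x = 0 := by
          rw [round_eq]
          apply Int.floor_eq_zero_iff.mpr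
          constructor <;> [linarith; linarith]
        rw [hr0, min_eq_left (by linarith)]
        push_cast
        rw [sub_zero, abs_of_nonneg hx0]
      · have hr1 : round x = 1 := by
          rw [round_eq]
          have : ⌊x + 1/2⌋ = 1 := by
            rw [Int.floor_eq_iff]
            constructor
            · push_cast; linarith
            · push_cast; linarith
          exact this
        rw [hr1, min_eq_right (by linarith)]
        push_cast
        rw [abs_sub_comm, abs_of_nonneg (by linarith)]
    have hne : |t - round t| ≠ 0 := by
      rw [hround, hxr]
      have : 0 < min x (1-x) := lt_min h0 (by linarith)
      positivity
    rw [if_neg hne, hround, hxr]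
    exact sawF_bound M hM1 h0 hx1
end

section
/- Van der Corput second-derivative estimate: let F be twice continuously differentiable on [P, 2P] with λ ≤ |F''(x)| ≤ Aλ for all x in [P, 2P], where λ > 0 and A ≥ 1. Then Σ_{P<n≤x} e(F(n)) ≪ A·P·λ^{1/2} + λ^{-1/2} uniformly for P < x ≤ 2P, where e(y) = e^{2πiy}. -/
open Real Finset

noncomputable def vdcCot (t : ℝ) : ℝ := Real.cos (π * t) / Real.sin (π * t)

noncomputable def vdcB (θ : ℝ) : ℂ := -(1/2 : ℂ) - Complex.I * ((vdcCot θ / 2 : ℝ) : ℂ)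

lemma vdcB_mul {θ : ℝ} (h0 : 0 < θ) (h1 : θ < 1) :
    (Complex.exp (2 * π * Complex.I * θ) - 1) * vdcB θ = 1 := by
  have hs : Real.sin (π * θ) ≠ 0 := by
    refine ne_of_gt (Real.sin_pos_of_pos_of_lt_pi (by positivity) ?_)
    nlinarith [Real.pi_pos]
  have hexp : Complex.exp (2 * π * Complex.I * θ)
      = (Real.cos (2 * (π * θ)) : ℝ) + (Real.sin (2 * (π * θ)) : ℝ) * Complex.I := by
    rw [show (2 * π * Complex.I * θ : ℂ) = ((2 * (π * θ) : ℝ) : ℂ) * Complex.I by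
      push_cast; ring]
    rw [Complex.exp_mul_I, ← Complex.ofReal_cos, ← Complex.ofReal_sin]
  rw [Real.cos_two_mul, Real.sin_two_mul] at hexp
  rw [hexp, vdcB, vdcCot]
  push_cast
  set cc : ℂ := Complex.cos (↑π * ↑θ) with hcc
  set ss : ℂ := Complex.sin (↑π * ↑θ) with hss
  have hpyth : ss ^ 2 + cc ^ 2 = 1 := Complex.sin_sq_add_cos_sq _
  have hsC : ss ≠ 0 := by
    rw [hss, show ((π:ℂ) * (θ:ℂ)) = ((π * θ : ℝ) : ℂ) by push_cast; ring,
      ← Complex.ofReal_sin]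
    exact_mod_cast hs
  have hI : (Complex.I)^2 = -1 := Complex.I_sq
  have hq : -(1/2 : ℂ) - Complex.I * (cc/ss/2) = (-ss - Complex.I*cc) / (2*ss) := by
    field_simp
  rw [hq, ← mul_div_assoc, div_eq_iff (by simpa using hsC : (2:ℂ)*ss ≠ 0)]
  linear_combination (-2*Complex.I*cc) * hpyth + (-2*ss*cc^2) * hI

lemma vdcCot_anti {x y : ℝ} (hx : 0 < x) (hxy : x ≤ y) (hy : y < 1) :
    vdcCot y ≤ vdcCot x := by
  have pipos := Real.pi_pos
  have hsx : 0 < Real.sin (π * x) :=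
    Real.sin_pos_of_pos_of_lt_pi (by positivity) (by nlinarith)
  have hsy : 0 < Real.sin (π * y) :=
    Real.sin_pos_of_pos_of_lt_pi (by nlinarith) (by nlinarith)
  rw [vdcCot, vdcCot, div_le_div_iff₀ hsy hsx]
  have h0 : 0 ≤ Real.sin (π * y - π * x) :=
    Real.sin_nonneg_of_nonneg_of_le_pi (by nlinarith) (by nlinarith)
  rw [Real.sin_sub] at h0
  nlinarith

lemma vdcCot_le_inv {x : ℝ} (hx : 0 < x) (hx2 : x ≤ 1/2) :
    vdcCot x ≤ 1 / (π * x) := by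
  have pipos := Real.pi_pos
  have hsx : 0 < Real.sin (π * x) :=
    Real.sin_pos_of_pos_of_lt_pi (by positivity) (by nlinarith)
  rw [vdcCot]
  rcases lt_or_eq_of_le (show π * x ≤ π/2 by nlinarith) with h | h
  · have ht := Real.lt_tan (by positivity : 0 < π * x) h
    rw [Real.tan_eq_sin_div_cos] at ht
    have hc : 0 < Real.cos (π * x) := Real.cos_pos_of_mem_Ioo ⟨by nlinarith, h⟩
    have h2 : (π * x) * Real.cos (π * x) < Real.sin (π * x) := by
      rwa [← lt_div_iff₀ hc]
    rw [div_le_div_iff₀ hsx (by positivity)]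
    nlinarith
  · rw [h, Real.cos_pi_div_two, zero_div]
    positivity

lemma vdcCot_neg_le {x : ℝ} (hx : 0 < x) (hx2 : x ≤ 1/2) :
    vdcCot (1 - x) = -vdcCot x := by
  rw [vdcCot, vdcCot, mul_sub, mul_one, Real.cos_pi_sub, Real.sin_pi_sub, neg_div]

lemma vdcCot_nonneg {x : ℝ} (hx : 0 < x) (hx2 : x ≤ 1/2) : 0 ≤ vdcCot x := by
  have pipos := Real.pi_pos
  have hsx : 0 < Real.sin (π * x) :=
    Real.sin_pos_of_pos_of_lt_pi (by positivity) (by nlinarith)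
  have hc : 0 ≤ Real.cos (π * x) :=
    Real.cos_nonneg_of_mem_Icc ⟨by nlinarith, by nlinarith⟩
  exact div_nonneg hc hsx.le

lemma norm_vdcB (θ : ℝ) : ‖vdcB θ‖ ≤ 1/2 + |vdcCot θ|/2 := by
  rw [vdcB]
  refine le_trans (norm_sub_le _ _) ?_
  rw [norm_neg, norm_mul, Complex.norm_I, one_mul, Complex.norm_real]
  simp [abs_div]

lemma norm_one_add_vdcB (θ : ℝ) : ‖1 + vdcB θ‖ ≤ 1/2 + |vdcCot θ|/2 := by
  rw [vdcB, show (1 : ℂ) + (-(1/2 : ℂ) - Complex.I * ((vdcCot θ / 2 : ℝ) : ℂ))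
    = (1/2 : ℂ) - Complex.I * ((vdcCot θ / 2 : ℝ) : ℂ) by ring]
  refine le_trans (norm_sub_le _ _) ?_
  rw [norm_mul, Complex.norm_I, one_mul, Complex.norm_real]
  simp [abs_div]

lemma norm_vdcB_sub (θ₁ θ₂ : ℝ) : ‖vdcB θ₁ - vdcB θ₂‖ = |vdcCot θ₁ - vdcCot θ₂|/2 := by
  rw [vdcB, vdcB, show (-(1/2 : ℂ) - Complex.I * ((vdcCot θ₁ / 2 : ℝ) : ℂ))
      - (-(1/2 : ℂ) - Complex.I * ((vdcCot θ₂ / 2 : ℝ) : ℂ))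
      = Complex.I * (((vdcCot θ₂ - vdcCot θ₁)/ 2 : ℝ) : ℂ) by push_cast; ring]
  rw [norm_mul, Complex.norm_I, one_mul, Complex.norm_real]
  rw [Real.norm_eq_abs, abs_div, abs_sub_comm]
  norm_num

lemma norm_e (y : ℝ) : ‖Complex.exp (2 * π * Complex.I * y)‖ = 1 := by
  rw [show (2*π*Complex.I*(y:ℂ)) = ((2*π*y : ℝ):ℂ) * Complex.I by push_cast; ring]
  exact Complex.norm_exp_ofReal_mul_I _

lemma kusmin_landau (ψ : ℤ → ℝ) (a b : ℤ) (hab : a ≤ b) (δ : ℝ) (hδ0 : 0 < δ) (hδ2 : δ ≤ 1/2)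
    (hlow : ∀ n, a ≤ n → n + 1 ≤ b → δ ≤ ψ (n+1) - ψ n)
    (hhigh : ∀ n, a ≤ n → n + 1 ≤ b → ψ (n+1) - ψ n ≤ 1 - δ)
    (hmono : ∀ n, a ≤ n → n + 2 ≤ b → ψ (n+1) - ψ n ≤ ψ (n+2) - ψ (n+1)) :
    ‖∑ n ∈ Finset.Icc a b, Complex.exp (2 * π * Complex.I * ψ n)‖ ≤ 3 / δ := by
  obtain ⟨E, hE⟩ : ∃ E : ℤ → ℂ, ∀ n, E n = Complex.exp (2 * π * Complex.I * ψ n) :=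
    ⟨_, fun _ => rfl⟩
  obtain ⟨θ, hθ⟩ : ∃ θ : ℤ → ℝ, ∀ n, θ n = ψ (n+1) - ψ n := ⟨_, fun _ => rfl⟩
  rw [show (∑ n ∈ Finset.Icc a b, Complex.exp (2*π*Complex.I*ψ n))
      = ∑ n ∈ Finset.Icc a b, E n from Finset.sum_congr rfl (fun n _ => (hE n).symm)]
  have hθ01 : ∀ n, a ≤ n → n + 1 ≤ b → 0 < θ n ∧ θ n < 1 := fun n h1 h2 =>
    ⟨by rw [hθ]; linarith [hlow n h1 h2], by rw [hθ]; linarith [hhigh n h1 h2]⟩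
  have hnorm : ∀ n, ‖E n‖ = 1 := fun n => by rw [hE]; exact norm_e (ψ n)
  have hrel : ∀ n, a ≤ n → n + 1 ≤ b → E n = (E (n+1) - E n) * vdcB (θ n) := by
    intro n h1 h2
    have h3 : E (n+1) = E n * Complex.exp (2 * π * Complex.I * θ n) := by
      rw [hE, hE, ← Complex.exp_add]
      congr 1
      rw [hθ]
      push_cast
      ring
    have h4 := vdcB_mul (hθ01 n h1 h2).1 (hθ01 n h1 h2).2
    calc E n = E n * ((Complex.exp (2*π*Complex.I*(θ n : ℝ)) - 1) * vdcB (θ n)) := by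
          rw [h4, mul_one]
      _ = (E n * Complex.exp (2*π*Complex.I*(θ n : ℝ)) - E n) * vdcB (θ n) := by ring
      _ = (E (n+1) - E n) * vdcB (θ n) := by rw [← h3]
  have main : ∀ b', a + 1 ≤ b' → b' ≤ b →
      ‖(∑ n ∈ Finset.Ico a b', E n) - E b' * vdcB (θ (b'-1))‖
        ≤ ‖vdcB (θ a)‖ + (vdcCot (θ a) - vdcCot (θ (b'-1)))/2 := by
    refine fun b' hb' => Int.le_induction
      (motive := fun c _ => c ≤ b →
        ‖(∑ n ∈ Finset.Ico a c, E n) - E c * vdcB (θ (c-1))‖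
          ≤ ‖vdcB (θ a)‖ + (vdcCot (θ a) - vdcCot (θ (c-1)))/2) ?_ ?_ b' hb'
    · intro hb
      have h1 : Finset.Ico a (a+1) = {a} := by ext n; simp; omega
      rw [h1, Finset.sum_singleton, show a+1-1 = a by ring]
      have hr := hrel a le_rfl (by omega)
      have hid : E a - E (a+1) * vdcB (θ a) = -(E a * vdcB (θ a)) := by
        calc E a - E (a+1) * vdcB (θ a)
            = (E (a+1) - E a) * vdcB (θ a) - E (a+1) * vdcB (θ a) := by rw [← hr]
          _ = -(E a * vdcB (θ a)) := by ring
      rw [hid, norm_neg, norm_mul, hnorm, one_mul, sub_self, zero_div, add_zero]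
    · intro n hn ih hnb
      have ihh := ih (by omega)
      have hins : Finset.Ico a (n+1) = insert n (Finset.Ico a n) := by
        ext m; simp; omega
      rw [hins, Finset.sum_insert (by simp), show n+1-1 = n by ring]
      have hr := hrel n (by omega) (by omega)
      have key : (E n + ∑ m ∈ Finset.Ico a n, E m) - E (n+1) * vdcB (θ n)
          = ((∑ m ∈ Finset.Ico a n, E m) - E n * vdcB (θ (n-1)))
            + E n * (vdcB (θ (n-1)) - vdcB (θ n)) := by
        have h0 : E n - (E (n+1) - E n) * vdcB (θ n) = 0 := by rw [← hr]; ring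
        linear_combination h0
      rw [key]
      refine le_trans (norm_add_le _ _) ?_
      have hBB : ‖E n * (vdcB (θ (n-1)) - vdcB (θ n))‖
          = |vdcCot (θ (n-1)) - vdcCot (θ n)|/2 := by
        rw [norm_mul, hnorm, one_mul, norm_vdcB_sub]
      have hmm : θ (n-1) ≤ θ n := by
        have h9 := hmono (n-1) (by omega) (by omega)
        rw [show n-1+1 = n by ring, show n-1+2 = n+1 by ring] at h9
        rw [hθ, hθ, show n-1+1 = n by ring]
        linarith
      have h1 := hθ01 (n-1) (by omega) (by omega)
      have h2 := hθ01 n (by omega) (by omega)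
      have hc : vdcCot (θ n) ≤ vdcCot (θ (n-1)) := vdcCot_anti h1.1 hmm h2.2
      rw [hBB, abs_of_nonneg (by linarith : (0:ℝ) ≤ vdcCot (θ (n-1)) - vdcCot (θ n))]
      linarith
  rcases eq_or_lt_of_le hab with rfl | hlt
  · rw [Finset.Icc_self, Finset.sum_singleton, hnorm a, le_div_iff₀ hδ0]
    linarith
  · have hb1 : a + 1 ≤ b := hlt
    have hm := main b hb1 le_rfl
    have hsplit : Finset.Icc a b = insert b (Finset.Ico a b) := by
      ext m; simp; omega
    rw [hsplit, Finset.sum_insert (by simp)]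
    have hid : E b + (∑ n ∈ Finset.Ico a b, E n)
        = ((∑ n ∈ Finset.Ico a b, E n) - E b * vdcB (θ (b-1))) + E b * (1 + vdcB (θ (b-1))) := by
      ring
    rw [hid]
    refine le_trans (norm_add_le _ _) ?_
    have h2 : ‖E b * (1 + vdcB (θ (b-1)))‖ ≤ 1/2 + |vdcCot (θ (b-1))|/2 := by
      rw [norm_mul, hnorm, one_mul]; exact norm_one_add_vdcB _
    have hKpos : 0 ≤ vdcCot δ := vdcCot_nonneg hδ0 hδ2
    have hKinv : vdcCot δ ≤ 1/(π*δ) := vdcCot_le_inv hδ0 hδ2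
    have hbound : ∀ n, a ≤ n → n+1 ≤ b → |vdcCot (θ n)| ≤ vdcCot δ := by
      intro n hn1 hn2
      have h3 := hθ01 n hn1 hn2
      have hl : δ ≤ θ n := by rw [hθ]; exact hlow n hn1 hn2
      have hh : θ n ≤ 1 - δ := by rw [hθ]; exact hhigh n hn1 hn2
      have hup : vdcCot (θ n) ≤ vdcCot δ := vdcCot_anti hδ0 hl h3.2
      have hdown : -vdcCot δ ≤ vdcCot (θ n) := by
        have h5 : vdcCot (1-δ) ≤ vdcCot (θ n) :=
          vdcCot_anti h3.1 hh (by linarith)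
        rw [vdcCot_neg_le hδ0 hδ2] at h5
        linarith
      exact abs_le.2 ⟨hdown, hup⟩
    have hB1 := norm_vdcB (θ a)
    have hca := abs_le.1 (hbound a le_rfl hb1)
    have hcb := abs_le.1 (hbound (b-1) (by omega) (by omega))
    have hπ : (3:ℝ) ≤ π := by linarith [Real.pi_gt_three]
    have hπδ : 0 < π * δ := mul_pos Real.pi_pos hδ0
    have ht3 : 1/(π*δ) ≤ (1/δ)/3 := by
      rw [div_le_div_iff₀ hπδ (by norm_num)]
      rw [div_mul_eq_mul_div, le_div_iff₀ hδ0]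
      nlinarith
    have ht2 : 1 ≤ (1/δ)/2 := by
      rw [le_div_iff₀ (by norm_num : (0:ℝ) < 2), le_div_iff₀ hδ0]
      linarith
    have htpos : 0 < 1/δ := by positivity
    have habs1 : |vdcCot (θ a)| ≤ vdcCot δ := hbound a le_rfl hb1
    have habs2 : |vdcCot (θ (b-1))| ≤ vdcCot δ := hbound (b-1) (by omega) (by omega)
    have hend : (3:ℝ)/δ = 3 * (1/δ) := by ring
    rw [hend]
    have e1 : vdcCot (θ a) ≤ vdcCot δ := le_trans (le_abs_self _) habs1
    have e2 : -vdcCot δ ≤ vdcCot (θ (b-1)) := by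
      have := neg_abs_le (vdcCot (θ (b-1))); linarith
    have e3 : |vdcCot (θ a)|/2 ≤ vdcCot δ/2 := by linarith
    have e4 : |vdcCot (θ (b-1))|/2 ≤ vdcCot δ/2 := by linarith
    linarith [hm, h2, hB1]

lemma vdc_key_mem (u : ℝ) (j : ℤ) {δ : ℝ} (hδ0 : 0 ≤ δ) (hδ1 : 2*δ ≤ 1) :
    ((((⌊u⌋ : ℤ), decide (Int.fract u < 2*δ)) = (j, false)) ↔ ((j:ℝ) + 2*δ ≤ u ∧ u < (j:ℝ) + 1))
    ∧ ((((⌊u⌋ : ℤ), decide (Int.fract u < 2*δ)) = (j, true)) ↔ ((j:ℝ) ≤ u ∧ u < (j:ℝ) + 2*δ)) := by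
  have hfr : Int.fract u = u - ⌊u⌋ := (Int.self_sub_floor u).symm
  have hfl := Int.floor_le u
  have hfu := Int.lt_floor_add_one u
  constructor
  · constructor
    · rintro h
      rw [Prod.mk.injEq, decide_eq_false_iff_not] at h
      obtain ⟨h1, h2⟩ := h
      push_neg at h2
      rw [hfr, h1] at h2
      rw [h1] at hfl hfu
      refine ⟨by linarith, by push_cast at hfu ⊢; linarith⟩
    · rintro ⟨h1, h2⟩
      have hfl2 : ⌊u⌋ = j := Int.floor_eq_iff.2 ⟨by linarith, by push_cast; linarith⟩
      rw [Prod.mk.injEq, decide_eq_false_iff_not]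
      refine ⟨hfl2, ?_⟩
      rw [hfr, hfl2]
      push_neg
      linarith
  · constructor
    · rintro h
      rw [Prod.mk.injEq, decide_eq_true_eq] at h
      obtain ⟨h1, h2⟩ := h
      rw [hfr, h1] at h2
      rw [h1] at hfl
      exact ⟨hfl, by linarith⟩
    · rintro ⟨h1, h2⟩
      have hfl2 : ⌊u⌋ = j := Int.floor_eq_iff.2 ⟨h1, by push_cast; linarith⟩
      rw [Prod.mk.injEq, decide_eq_true_eq]
      exact ⟨hfl2, by rw [hfr, hfl2]; linarith⟩

lemma vdc_pos_case (P x A lam : ℝ) (F : ℝ → ℝ)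
    (hP : 1 ≤ P) (hPx : P < x) (hx2 : x ≤ 2*P) (hlam : 0 < lam) (hA : 1 ≤ A)
    (hlam4 : lam ≤ 1/4)
    (hF : ContDiffOn ℝ 2 F (Set.Icc P (2*P)))
    (hpos : ∀ y ∈ Set.Icc P (2*P),
      lam ≤ iteratedDerivWithin 2 F (Set.Icc P (2*P)) y ∧
      iteratedDerivWithin 2 F (Set.Icc P (2*P)) y ≤ A * lam) :
    ‖∑ n ∈ Finset.Ioc ⌊P⌋ ⌊x⌋, Complex.exp (2 * π * Complex.I * F (n : ℝ))‖
      ≤ 12 * (A * P * Real.sqrt lam + 1 / Real.sqrt lam) := by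
  classical
  have hP2 : P < 2*P := by linarith
  obtain ⟨φ, hφdef⟩ : ∃ φ : ℝ → ℝ, φ = derivWithin F (Set.Icc P (2*P)) := ⟨_, rfl⟩
  obtain ⟨G, hGdef⟩ : ∃ G : ℝ → ℝ, G = iteratedDerivWithin 2 F (Set.Icc P (2*P)) := ⟨_, rfl⟩
  have hs : UniqueDiffOn ℝ (Set.Icc P (2*P)) := uniqueDiffOn_Icc hP2
  have hφC1 : ContDiffOn ℝ 1 φ (Set.Icc P (2*P)) := hφdef ▸ hF.derivWithin hs (by norm_num)
  have hφcont : ContinuousOn φ (Set.Icc P (2*P)) := hφC1.continuousOn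
  have hFd : ∀ t ∈ Set.Ioo P (2*P), HasDerivAt F (φ t) t := by
    intro t ht
    have hts : t ∈ Set.Icc P (2*P) := Set.Ioo_subset_Icc_self ht
    have h1 : DifferentiableWithinAt ℝ F (Set.Icc P (2*P)) t :=
      (hF.differentiableOn (by norm_num)) t hts
    rw [hφdef]
    exact h1.hasDerivWithinAt.hasDerivAt (Icc_mem_nhds ht.1 ht.2)
  have hφd : ∀ t ∈ Set.Ioo P (2*P), HasDerivAt φ (G t) t := by
    intro t ht
    have hts : t ∈ Set.Icc P (2*P) := Set.Ioo_subset_Icc_self ht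
    have h1 : DifferentiableWithinAt ℝ φ (Set.Icc P (2*P)) t :=
      (hφC1.differentiableOn (by norm_num)) t hts
    have h2 : HasDerivAt φ (derivWithin φ (Set.Icc P (2*P)) t) t :=
      h1.hasDerivWithinAt.hasDerivAt (Icc_mem_nhds ht.1 ht.2)
    have h3 : G t = derivWithin φ (Set.Icc P (2*P)) t := by
      rw [hGdef, show (2:ℕ) = 1 + 1 from rfl, iteratedDerivWithin_succ, hφdef]
      exact derivWithin_congr (fun y hy => congrFun iteratedDerivWithin_one y)
        (congrFun iteratedDerivWithin_one t)
    rwa [h3]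
  have hpos' : ∀ y ∈ Set.Icc P (2*P), lam ≤ G y ∧ G y ≤ A * lam := by
    intro y hy; rw [hGdef]; exact hpos y hy
  have hslope : ∀ u v : ℝ, P ≤ u → u < v → v ≤ 2*P →
      ∃ ξ, ξ ∈ Set.Ioo u v ∧ φ ξ = (F v - F u) / (v - u) := by
    intro u v hu huv hv
    obtain ⟨ξ, h1, h2⟩ := exists_hasDerivAt_eq_slope F φ huv
      (hF.continuousOn.mono (Set.Icc_subset_Icc hu hv)) (fun t ht =>
        hFd t ⟨lt_of_le_of_lt hu ht.1, lt_of_lt_of_le ht.2 hv⟩)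
    exact ⟨ξ, h1, h2⟩
  have hgrow : ∀ u v : ℝ, P ≤ u → u ≤ v → v ≤ 2*P →
      lam * (v - u) ≤ φ v - φ u ∧ φ v - φ u ≤ A * lam * (v - u) := by
    intro u v hu huv hv
    rcases eq_or_lt_of_le huv with rfl | hlt
    · simp
    obtain ⟨ξ, hξ, hξe⟩ := exists_hasDerivAt_eq_slope φ G hlt
      (hφcont.mono (Set.Icc_subset_Icc hu hv))
      (fun t ht => hφd t ⟨lt_of_le_of_lt hu ht.1, lt_of_lt_of_le ht.2 hv⟩)
    have hξs : ξ ∈ Set.Icc P (2*P) := ⟨by linarith [hξ.1], by linarith [hξ.2]⟩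
    have hb := hpos' ξ hξs
    have hvu : 0 < v - u := by linarith
    constructor
    · have h1 : lam ≤ (φ v - φ u) / (v - u) := by rw [← hξe]; exact hb.1
      calc lam * (v - u) ≤ ((φ v - φ u) / (v - u)) * (v - u) :=
            mul_le_mul_of_nonneg_right h1 hvu.le
        _ = φ v - φ u := by field_simp
    · have h1 : (φ v - φ u) / (v - u) ≤ A * lam := by rw [← hξe]; exact hb.2
      calc φ v - φ u = ((φ v - φ u) / (v - u)) * (v - u) := by field_simp
        _ ≤ A * lam * (v - u) := mul_le_mul_of_nonneg_right h1 hvu.le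
  have hφmono : ∀ u v : ℝ, P ≤ u → u ≤ v → v ≤ 2*P → φ u ≤ φ v := by
    intro u v hu huv hv
    have h1 := (hgrow u v hu huv hv).1
    nlinarith
  obtain ⟨δ, hδdef⟩ : ∃ δ : ℝ, δ = Real.sqrt lam := ⟨_, rfl⟩
  have hδ0 : 0 < δ := hδdef ▸ Real.sqrt_pos.2 hlam
  have hδδ : δ * δ = lam := hδdef ▸ Real.mul_self_sqrt hlam.le
  have hδhalf : δ ≤ 1/2 := by
    have h1 : Real.sqrt lam ≤ Real.sqrt (1/4) := Real.sqrt_le_sqrt hlam4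
    rw [show (1/4:ℝ) = (1/2)^2 by norm_num,
      Real.sqrt_sq (by norm_num : (0:ℝ) ≤ 1/2)] at h1
    rw [hδdef]; exact h1
  have h2δ : 2*δ ≤ 1 := by linarith
  have hmem : ∀ n ∈ Finset.Ioc ⌊P⌋ ⌊x⌋, P < (n:ℝ) ∧ (n:ℝ) ≤ 2*P := by
    intro n hn
    rw [Finset.mem_Ioc] at hn
    constructor
    · have h1 : (⌊P⌋ : ℝ) + 1 ≤ n := by exact_mod_cast hn.1
      linarith [Int.lt_floor_add_one P]
    · have h1 : (n : ℝ) ≤ ⌊x⌋ := by exact_mod_cast hn.2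
      linarith [Int.floor_le x]
  obtain ⟨k, hkdef⟩ : ∃ k : ℤ → ℤ × Bool,
      ∀ n, k n = (⌊φ n + δ⌋, decide (Int.fract (φ n + δ) < 2*δ)) := ⟨_, fun _ => rfl⟩
  obtain ⟨T, hTdef⟩ : ∃ T : Finset (ℤ × Bool),
      T = Finset.Icc ⌊φ P + δ⌋ ⌊φ (2*P) + δ⌋ ×ˢ Finset.univ := ⟨_, rfl⟩
  have hkT : ∀ n ∈ Finset.Ioc ⌊P⌋ ⌊x⌋, k n ∈ T := by
    intro n hn
    rw [hTdef, hkdef, Finset.mem_product]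
    refine ⟨Finset.mem_Icc.2 ⟨Int.floor_le_floor ?_, Int.floor_le_floor ?_⟩, Finset.mem_univ _⟩
    · have h1 := hφmono P n le_rfl (hmem n hn).1.le (hmem n hn).2
      linarith
    · have h1 := hφmono n (2*P) (hmem n hn).1.le (hmem n hn).2 le_rfl
      linarith
  obtain ⟨e, hedef⟩ : ∃ e : ℤ → ℂ,
      ∀ n : ℤ, e n = Complex.exp (2 * π * Complex.I * F (n : ℝ)) := ⟨_, fun _ => rfl⟩
  rw [show (∑ n ∈ Finset.Ioc ⌊P⌋ ⌊x⌋, Complex.exp (2 * π * Complex.I * F (n : ℝ)))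
      = ∑ n ∈ Finset.Ioc ⌊P⌋ ⌊x⌋, e n from Finset.sum_congr rfl fun n _ => (hedef n).symm]
  have hsum : (∑ n ∈ Finset.Ioc ⌊P⌋ ⌊x⌋, e n)
      = ∑ p ∈ T, ∑ n ∈ (Finset.Ioc ⌊P⌋ ⌊x⌋).filter (fun n => k n = p), e n := by
    rw [Finset.sum_fiberwise_eq_sum_filter (Finset.Ioc ⌊P⌋ ⌊x⌋) T k e,
      Finset.filter_true_of_mem hkT]
  have hfiber : ∀ p ∈ T, ‖∑ n ∈ (Finset.Ioc ⌊P⌋ ⌊x⌋).filter (fun n => k n = p), e n‖ ≤ 3/δ := by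
    rintro ⟨j, tf⟩ _
    obtain ⟨t, htdef⟩ : ∃ t : Finset ℤ,
        t = (Finset.Ioc ⌊P⌋ ⌊x⌋).filter (fun n => k n = (j, tf)) := ⟨_, rfl⟩
    rw [← htdef]
    rcases Finset.eq_empty_or_nonempty t with h | hne
    · rw [h, Finset.sum_empty, norm_zero]
      positivity
    have htS : ∀ n ∈ t, n ∈ Finset.Ioc ⌊P⌋ ⌊x⌋ := by
      intro n hn; rw [htdef, Finset.mem_filter] at hn; exact hn.1
    have ht1 : 1 ≤ (1/δ)/2 := by
      rw [le_div_iff₀ (by norm_num : (0:ℝ) < 2), le_div_iff₀ hδ0]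
      linarith
    have htpos : (0:ℝ) < 1/δ := by positivity
    cases tf with
    | true =>
      -- bad fiber: each |φ n - (j - δ)| small, few terms
      have hchar : ∀ n, n ∈ t → (j:ℝ) - δ ≤ φ n ∧ φ n < (j:ℝ) + δ := by
        intro n hn
        rw [htdef, Finset.mem_filter, hkdef] at hn
        have h1 := (vdc_key_mem (φ n + δ) j hδ0.le h2δ).2.1 hn.2
        exact ⟨by linarith [h1.1], by linarith [h1.2]⟩
      obtain ⟨m, hm⟩ := hne
      have hsub : t ⊆ Finset.Icc (t.min' ⟨m, hm⟩) (t.max' ⟨m, hm⟩) := fun n hn =>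
        Finset.mem_Icc.2 ⟨Finset.min'_le t n hn, Finset.le_max' t n hn⟩
      have hminmem := t.min'_mem ⟨m, hm⟩
      have hmaxmem := t.max'_mem ⟨m, hm⟩
      have hmmle : t.min' ⟨m, hm⟩ ≤ t.max' ⟨m, hm⟩ := Finset.min'_le t _ hmaxmem
      have hcard : (t.card : ℝ) ≤ ((t.max' ⟨m, hm⟩ : ℝ) - (t.min' ⟨m, hm⟩ : ℝ)) + 1 := by
        have h1 := Finset.card_le_card hsub
        have h2 : ((Finset.Icc (t.min' ⟨m, hm⟩) (t.max' ⟨m, hm⟩)).card : ℤ)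
            = t.max' ⟨m, hm⟩ + 1 - t.min' ⟨m, hm⟩ := Int.card_Icc_of_le _ _ (by omega)
        have h3 : (t.card : ℤ) ≤ t.max' ⟨m, hm⟩ + 1 - t.min' ⟨m, hm⟩ := by
          rw [← h2]; exact_mod_cast h1
        have h4 : (t.card : ℝ) ≤ ((t.max' ⟨m, hm⟩ + 1 - t.min' ⟨m, hm⟩ : ℤ) : ℝ) := by
          exact_mod_cast h3
        push_cast at h4
        linarith
      have hd : ((t.max' ⟨m, hm⟩ : ℝ) - (t.min' ⟨m, hm⟩ : ℝ)) ≤ 2/δ := by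
        have hminS := htS _ hminmem
        have hmaxS := htS _ hmaxmem
        have hg := (hgrow (t.min' ⟨m, hm⟩) (t.max' ⟨m, hm⟩) (hmem _ hminS).1.le
          (by exact_mod_cast hmmle) (hmem _ hmaxS).2).1
        have hc1 := hchar _ hminmem
        have hc2 := hchar _ hmaxmem
        have h5 : lam * ((t.max' ⟨m, hm⟩ : ℝ) - (t.min' ⟨m, hm⟩ : ℝ)) ≤ 2*δ := by linarith
        rw [← hδδ] at h5
        rw [le_div_iff₀ hδ0]
        nlinarith
      have hnorm : ‖∑ n ∈ t, e n‖ ≤ (t.card : ℝ) := by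
        refine le_trans (norm_sum_le _ _) ?_
        rw [show ((t.card : ℝ)) = ∑ _n ∈ t, (1:ℝ) by simp]
        refine Finset.sum_le_sum (fun n _ => ?_)
        rw [hedef]
        exact le_of_eq (norm_e (F (n:ℝ)))
      have hfin : (2:ℝ)/δ = 2*(1/δ) := by ring
      have hfin3 : (3:ℝ)/δ = 3*(1/δ) := by ring
      rw [hfin3]
      rw [hfin] at hd
      linarith
    | false =>
      -- good fiber: Kusmin-Landau
      have hchar : ∀ n : ℤ, n ∈ t ↔ n ∈ Finset.Ioc ⌊P⌋ ⌊x⌋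
          ∧ (j:ℝ) + δ ≤ φ n ∧ φ n < (j:ℝ) + 1 - δ := by
        intro n
        rw [htdef, Finset.mem_filter, hkdef]
        rw [(vdc_key_mem (φ n + δ) j hδ0.le h2δ).1]
        constructor
        · rintro ⟨h1, h2, h3⟩; exact ⟨h1, by linarith, by linarith⟩
        · rintro ⟨h1, h2, h3⟩; exact ⟨h1, by linarith, by linarith⟩
      obtain ⟨a, b, hab, hicc⟩ : ∃ a b : ℤ, a ≤ b ∧ t = Finset.Icc a b := by
        refine ⟨t.min' hne, t.max' hne, Finset.min'_le t _ (t.max'_mem hne), ?_⟩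
        apply Finset.Subset.antisymm
        · exact fun n hn => Finset.mem_Icc.2 ⟨Finset.min'_le t n hn, Finset.le_max' t n hn⟩
        · intro n hn
          rw [Finset.mem_Icc] at hn
          have haa := (hchar _).1 (t.min'_mem hne)
          have hbb := (hchar _).1 (t.max'_mem hne)
          have haa1 := Finset.mem_Ioc.1 haa.1
          have hbb1 := Finset.mem_Ioc.1 hbb.1
          have hnS : n ∈ Finset.Ioc ⌊P⌋ ⌊x⌋ := Finset.mem_Ioc.2 ⟨by omega, by omega⟩
          have hcast1 : ((t.min' hne : ℤ) : ℝ) ≤ (n : ℝ) := by exact_mod_cast hn.1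
          have hcast2 : ((n : ℤ) : ℝ) ≤ ((t.max' hne : ℤ) : ℝ) := by exact_mod_cast hn.2
          refine (hchar n).2 ⟨hnS, ?_, ?_⟩
          · have h1 := hφmono _ _ (hmem _ haa.1).1.le hcast1 (hmem _ hnS).2
            linarith [haa.2.1]
          · have h1 := hφmono _ _ (hmem _ hnS).1.le hcast2 (hmem _ hbb.1).2
            linarith [hbb.2.2]
      have hmemt : ∀ n : ℤ, a ≤ n → n ≤ b → n ∈ t := by
        intro n h1 h2; rw [hicc]; exact Finset.mem_Icc.2 ⟨h1, h2⟩
      -- MVT data for consecutive integers in [a, b]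
      have hstep : ∀ n : ℤ, a ≤ n → n + 1 ≤ b →
          (j:ℝ) + δ ≤ F ((n:ℝ)+1) - F (n:ℝ) ∧ F ((n:ℝ)+1) - F (n:ℝ) ≤ (j:ℝ) + 1 - δ := by
        intro n h1 h2
        have hnt := hmemt n h1 (by omega)
        have hn1t := hmemt (n+1) (by omega) h2
        have hnS := ((hchar n).1 hnt).1
        have hn1S := ((hchar (n+1)).1 hn1t).1
        have hc1 := ((hchar n).1 hnt).2
        have hc2 := ((hchar (n+1)).1 hn1t).2
        have hPn : P ≤ (n:ℝ) := (hmem n hnS).1.le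
        have h2Pn1 : (n:ℝ) + 1 ≤ 2*P := by
          have h3 := (hmem (n+1) hn1S).2
          push_cast at h3
          linarith
        obtain ⟨ξ, hξmem, hξe⟩ := hslope (n:ℝ) ((n:ℝ)+1) hPn (by linarith) h2Pn1
        have hξe' : φ ξ = F ((n:ℝ)+1) - F (n:ℝ) := by
          rw [hξe, show ((n:ℝ)+1 - n) = 1 by ring, div_one]
        have hmono1 : φ (n:ℝ) ≤ φ ξ :=
          hφmono _ _ hPn hξmem.1.le (by linarith [hξmem.2])
        have hmono2 : φ ξ ≤ φ ((n:ℝ)+1) :=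
          hφmono _ _ (by linarith [hξmem.1]) hξmem.2.le h2Pn1
        have hcast : φ (((n+1:ℤ)):ℝ) = φ ((n:ℝ)+1) := by push_cast; ring_nf
        rw [hcast] at hc2
        exact ⟨by linarith [hc1.1], by linarith [hc2.2]⟩
      have hstepmono : ∀ n : ℤ, a ≤ n → n + 2 ≤ b →
          F ((n:ℝ)+1) - F (n:ℝ) ≤ F ((n:ℝ)+2) - F ((n:ℝ)+1) := by
        intro n h1 h2
        have hnt := hmemt n h1 (by omega)
        have hn2t := hmemt (n+2) (by omega) h2
        have hnS := ((hchar n).1 hnt).1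
        have hn2S := ((hchar (n+2)).1 hn2t).1
        have hPn : P ≤ (n:ℝ) := (hmem n hnS).1.le
        have h2Pn2 : (n:ℝ) + 2 ≤ 2*P := by
          have h3 := (hmem (n+2) hn2S).2
          push_cast at h3
          linarith
        obtain ⟨ξ₁, hξ₁mem, hξ₁e⟩ := hslope (n:ℝ) ((n:ℝ)+1) hPn (by linarith) (by linarith)
        obtain ⟨ξ₂, hξ₂mem, hξ₂e⟩ := hslope ((n:ℝ)+1) ((n:ℝ)+2) (by linarith)
          (by linarith) h2Pn2
        have hξ₁e' : φ ξ₁ = F ((n:ℝ)+1) - F (n:ℝ) := by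
          rw [hξ₁e, show ((n:ℝ)+1 - n) = 1 by ring, div_one]
        have hξ₂e' : φ ξ₂ = F ((n:ℝ)+2) - F ((n:ℝ)+1) := by
          rw [hξ₂e, show ((n:ℝ)+2 - ((n:ℝ)+1)) = 1 by ring, div_one]
        have hmono12 : φ ξ₁ ≤ φ ξ₂ := hφmono _ _ (by linarith [hξ₁mem.1])
          (by linarith [hξ₁mem.2, hξ₂mem.1]) (by linarith [hξ₂mem.2])
        linarith [hξ₁e' ▸ hξ₂e' ▸ hmono12]
      -- apply Kusmin-Landau to ψ n = F n - j n
      obtain ⟨ψ, hψdef⟩ : ∃ ψ : ℤ → ℝ, ∀ m : ℤ, ψ m = F (m:ℝ) - (j:ℝ)*(m:ℝ) :=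
        ⟨_, fun _ => rfl⟩
      have hψd : ∀ n : ℤ, ψ (n+1) - ψ n = F ((n:ℝ)+1) - F (n:ℝ) - j := by
        intro n
        rw [hψdef, hψdef]
        push_cast
        ring
      have hψd2 : ∀ n : ℤ, ψ (n+2) - ψ (n+1) = F ((n:ℝ)+2) - F ((n:ℝ)+1) - j := by
        intro n
        rw [hψdef, hψdef]
        push_cast
        ring
      have hKL := kusmin_landau ψ a b hab δ hδ0 hδhalf
        (fun n h1 h2 => by rw [hψd]; linarith [(hstep n h1 h2).1])
        (fun n h1 h2 => by rw [hψd]; linarith [(hstep n h1 h2).2])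
        (fun n h1 h2 => by rw [hψd, hψd2]; linarith [hstepmono n h1 h2])
      have hsum_eq : (∑ n ∈ t, e n) = ∑ n ∈ Finset.Icc a b, Complex.exp (2*π*Complex.I*ψ n) := by
        rw [hicc]
        refine Finset.sum_congr rfl (fun n _ => ?_)
        rw [hedef, hψdef]
        rw [show (2*π*Complex.I*((F (n:ℝ) - (j:ℝ)*(n:ℝ) : ℝ)) : ℂ)
            = 2*π*Complex.I*(F (n:ℝ) : ℝ) + ((-(j*n) : ℤ) : ℂ) * (2*π*Complex.I) by
          push_cast; ring]
        rw [Complex.exp_add, Complex.exp_int_mul_two_pi_mul_I, mul_one]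
      rw [hsum_eq]
      exact hKL
  -- assemble
  calc ‖∑ n ∈ Finset.Ioc ⌊P⌋ ⌊x⌋, e n‖
      = ‖∑ p ∈ T, ∑ n ∈ (Finset.Ioc ⌊P⌋ ⌊x⌋).filter (fun n => k n = p), e n‖ := by rw [hsum]
    _ ≤ ∑ p ∈ T, ‖∑ n ∈ (Finset.Ioc ⌊P⌋ ⌊x⌋).filter (fun n => k n = p), e n‖ :=
        norm_sum_le _ _
    _ ≤ (T.card : ℝ) * (3/δ) := by
        have h1 := Finset.sum_le_card_nsmul T _ (3/δ) (fun p hp => hfiber p hp)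
        rwa [nsmul_eq_mul] at h1
    _ ≤ (2*(A*lam*P + 2)) * (3/δ) := by
        refine mul_le_mul_of_nonneg_right ?_ (by positivity)
        have hj : ⌊φ P + δ⌋ ≤ ⌊φ (2*P) + δ⌋ := Int.floor_le_floor
          (by linarith [hφmono P (2*P) le_rfl (by linarith) le_rfl])
        have hcard : T.card = (Finset.Icc ⌊φ P + δ⌋ ⌊φ (2*P) + δ⌋).card * 2 := by
          rw [hTdef, Finset.card_product, Finset.card_univ]
          simp
        have h2 : ((Finset.Icc ⌊φ P + δ⌋ ⌊φ (2*P) + δ⌋).card : ℤ)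
            = ⌊φ (2*P) + δ⌋ + 1 - ⌊φ P + δ⌋ := Int.card_Icc_of_le _ _ (by omega)
        have h3 : ((Finset.Icc ⌊φ P + δ⌋ ⌊φ (2*P) + δ⌋).card : ℝ)
            = (⌊φ (2*P) + δ⌋ : ℝ) + 1 - (⌊φ P + δ⌋ : ℝ) := by
          exact_mod_cast h2
        have h4 : (⌊φ (2*P) + δ⌋ : ℝ) ≤ φ (2*P) + δ := Int.floor_le _
        have h5 : φ P + δ - 1 < (⌊φ P + δ⌋ : ℝ) := Int.sub_one_lt_floor _
        have h6 := (hgrow P (2*P) le_rfl (by linarith) le_rfl).2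
        have h7 : (T.card : ℝ) = ((Finset.Icc ⌊φ P + δ⌋ ⌊φ (2*P) + δ⌋).card : ℝ) * 2 := by
          exact_mod_cast hcard
        rw [h7, h3]
        nlinarith
    _ ≤ 12 * (A * P * δ + 1/δ) := by
        have hAP : (0:ℝ) ≤ A * P * δ := by positivity
        have heq : (2*(A*lam*P + 2)) * (3/δ) = 6*A*P*δ + 12*(1/δ) := by
          rw [← hδδ]
          field_simp
          ring
        rw [heq]
        linarith
    _ = 12 * (A * P * Real.sqrt lam + 1 / Real.sqrt lam) := by rw [hδdef]

theorem van_der_corput_second_derivative :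
    ∃ C > 0, ∀ (P x A lam : ℝ) (F : ℝ → ℝ),
      1 ≤ P → P < x → x ≤ 2 * P → 0 < lam → 1 ≤ A →
      ContDiffOn ℝ 2 F (Set.Icc P (2 * P)) →
      (∀ y ∈ Set.Icc P (2 * P),
        lam ≤ |iteratedDerivWithin 2 F (Set.Icc P (2 * P)) y| ∧
        |iteratedDerivWithin 2 F (Set.Icc P (2 * P)) y| ≤ A * lam) →
      ‖∑ n ∈ Finset.Ioc ⌊P⌋ ⌊x⌋, Complex.exp (2 * Real.pi * Complex.I * F (n : ℝ))‖
        ≤ C * (A * P * lam ^ ((1 : ℝ) / 2) + lam ^ (-(1 : ℝ) / 2)) := by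
  refine ⟨12, by norm_num, ?_⟩
  intro P x A lam F hP hPx hx2 hlam hA hF hbound
  have hP2 : P < 2*P := by linarith
  have hrw1 : lam ^ ((1:ℝ)/2) = Real.sqrt lam := (Real.sqrt_eq_rpow lam).symm
  have hrw2 : lam ^ (-(1:ℝ)/2) = 1 / Real.sqrt lam := by
    rw [show (-(1:ℝ)/2) = -((1:ℝ)/2) by ring, Real.rpow_neg hlam.le, hrw1, one_div]
  rw [hrw1, hrw2]
  by_cases hcase : lam ≤ 1/4
  · -- main case
    have hsuniq : UniqueDiffOn ℝ (Set.Icc P (2*P)) := uniqueDiffOn_Icc hP2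
    have hcont : ContinuousOn (iteratedDerivWithin 2 F (Set.Icc P (2*P))) (Set.Icc P (2*P)) :=
      hF.continuousOn_iteratedDerivWithin le_rfl hsuniq
    have hne : ∀ y ∈ Set.Icc P (2*P), iteratedDerivWithin 2 F (Set.Icc P (2*P)) y ≠ 0 := by
      intro y hy h0
      have h1 := (hbound y hy).1
      rw [h0, abs_zero] at h1
      linarith
    have hPmem : P ∈ Set.Icc P (2*P) := ⟨le_rfl, by linarith⟩
    have hsign : (∀ y ∈ Set.Icc P (2*P), 0 < iteratedDerivWithin 2 F (Set.Icc P (2*P)) y)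
        ∨ (∀ y ∈ Set.Icc P (2*P), iteratedDerivWithin 2 F (Set.Icc P (2*P)) y < 0) := by
      by_cases h : 0 < iteratedDerivWithin 2 F (Set.Icc P (2*P)) P
      · left
        intro y hy
        by_contra hle
        push_neg at hle
        have hyneg : iteratedDerivWithin 2 F (Set.Icc P (2*P)) y < 0 :=
          lt_of_le_of_ne hle (hne y hy)
        have hsub : Set.Icc P y ⊆ Set.Icc P (2*P) := Set.Icc_subset_Icc le_rfl hy.2
        obtain ⟨z, hz, hz0⟩ := intermediate_value_Icc' hy.1 (hcont.mono hsub)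
          (Set.mem_Icc.2 ⟨hyneg.le, h.le⟩)
        exact hne z (hsub hz) hz0
      · right
        push_neg at h
        have hPneg : iteratedDerivWithin 2 F (Set.Icc P (2*P)) P < 0 :=
          lt_of_le_of_ne h (hne P hPmem)
        intro y hy
        by_contra hle
        push_neg at hle
        have hypos : 0 < iteratedDerivWithin 2 F (Set.Icc P (2*P)) y :=
          lt_of_le_of_ne hle (Ne.symm (hne y hy))
        have hsub : Set.Icc P y ⊆ Set.Icc P (2*P) := Set.Icc_subset_Icc le_rfl hy.2
        obtain ⟨z, hz, hz0⟩ := intermediate_value_Icc hy.1 (hcont.mono hsub)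
          (Set.mem_Icc.2 ⟨hPneg.le, hypos.le⟩)
        exact hne z (hsub hz) hz0
    rcases hsign with hsgn | hsgn
    · have hpos : ∀ y ∈ Set.Icc P (2*P),
          lam ≤ iteratedDerivWithin 2 F (Set.Icc P (2*P)) y ∧
          iteratedDerivWithin 2 F (Set.Icc P (2*P)) y ≤ A * lam := by
        intro y hy
        have h1 := hbound y hy
        rw [abs_of_pos (hsgn y hy)] at h1
        exact h1
      exact vdc_pos_case P x A lam F hP hPx hx2 hlam hA hcase hF hpos
    · have hFneg : ContDiffOn ℝ 2 (fun z => -(F z)) (Set.Icc P (2*P)) := hF.neg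
      have hiter : ∀ y ∈ Set.Icc P (2*P),
          iteratedDerivWithin 2 (fun z => -(F z)) (Set.Icc P (2*P)) y
            = -(iteratedDerivWithin 2 F (Set.Icc P (2*P)) y) :=
        fun y hy => iteratedDerivWithin_fun_neg F
      have hpos : ∀ y ∈ Set.Icc P (2*P),
          lam ≤ iteratedDerivWithin 2 (fun z => -(F z)) (Set.Icc P (2*P)) y ∧
          iteratedDerivWithin 2 (fun z => -(F z)) (Set.Icc P (2*P)) y ≤ A * lam := by
        intro y hy
        rw [hiter y hy]
        have h1 := hbound y hy
        rw [abs_of_neg (hsgn y hy)] at h1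
        exact ⟨h1.1, h1.2⟩
      have hkey := vdc_pos_case P x A lam (fun z => -(F z)) hP hPx hx2 hlam hA hcase hFneg hpos
      have hconj : ∀ n : ℤ, Complex.exp (2*π*Complex.I*((-(F (n:ℝ)) : ℝ) : ℂ))
          = (starRingEnd ℂ) (Complex.exp (2*π*Complex.I*((F (n:ℝ) : ℝ) : ℂ))) := by
        intro n
        rw [← Complex.exp_conj]
        congr 1
        rw [map_mul, map_mul, map_mul]
        rw [Complex.conj_I, Complex.conj_ofReal, Complex.conj_ofReal, map_ofNat]
        push_cast
        ring
      calc ‖∑ n ∈ Finset.Ioc ⌊P⌋ ⌊x⌋, Complex.exp (2 * π * Complex.I * (F (n:ℝ) : ℂ))‖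
          = ‖(starRingEnd ℂ) (∑ n ∈ Finset.Ioc ⌊P⌋ ⌊x⌋,
              Complex.exp (2 * π * Complex.I * (F (n:ℝ) : ℂ)))‖ := (RCLike.norm_conj _).symm
        _ = ‖∑ n ∈ Finset.Ioc ⌊P⌋ ⌊x⌋,
              (starRingEnd ℂ) (Complex.exp (2 * π * Complex.I * (F (n:ℝ) : ℂ)))‖ := by
            rw [map_sum]
        _ = ‖∑ n ∈ Finset.Ioc ⌊P⌋ ⌊x⌋,
              Complex.exp (2 * π * Complex.I * ((-(F (n:ℝ)) : ℝ) : ℂ))‖ := by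
            rw [Finset.sum_congr rfl (fun n _ => (hconj n).symm)]
        _ ≤ 12 * (A * P * Real.sqrt lam + 1 / Real.sqrt lam) := hkey
  · -- trivial case
    push_neg at hcase
    have hfl : ⌊P⌋ ≤ ⌊x⌋ := Int.floor_le_floor hPx.le
    have hcard : ((Finset.Ioc ⌊P⌋ ⌊x⌋).card : ℝ) ≤ P + 1 := by
      have h1 : ((Finset.Ioc ⌊P⌋ ⌊x⌋).card : ℤ) = ⌊x⌋ - ⌊P⌋ := Int.card_Ioc_of_le _ _ hfl
      have h2 : ((Finset.Ioc ⌊P⌋ ⌊x⌋).card : ℝ) = (⌊x⌋ : ℝ) - (⌊P⌋ : ℝ) := by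
        exact_mod_cast h1
      rw [h2]
      have h3 := Int.floor_le x
      have h4 := Int.sub_one_lt_floor P
      linarith
    have hnorm : ‖∑ n ∈ Finset.Ioc ⌊P⌋ ⌊x⌋, Complex.exp (2 * π * Complex.I * (F (n:ℝ) : ℂ))‖
        ≤ ((Finset.Ioc ⌊P⌋ ⌊x⌋).card : ℝ) := by
      refine le_trans (norm_sum_le _ _) ?_
      rw [show (((Finset.Ioc ⌊P⌋ ⌊x⌋).card : ℝ)) = ∑ _n ∈ Finset.Ioc ⌊P⌋ ⌊x⌋, (1:ℝ) by simp]
      exact Finset.sum_le_sum (fun n _ => le_of_eq (norm_e (F (n:ℝ))))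
    have hsqrt : 1/2 < Real.sqrt lam := by
      have h1 : Real.sqrt (1/4) < Real.sqrt lam := Real.sqrt_lt_sqrt (by norm_num) hcase
      rwa [show (1/4:ℝ) = (1/2)^2 by norm_num,
        Real.sqrt_sq (by norm_num : (0:ℝ) ≤ 1/2)] at h1
    have hsqrtpos : 0 < Real.sqrt lam := by linarith
    have hinvpos : 0 < 1 / Real.sqrt lam := by positivity
    have hAP : 1 ≤ A * P := by nlinarith
    calc ‖∑ n ∈ Finset.Ioc ⌊P⌋ ⌊x⌋, Complex.exp (2 * π * Complex.I * (F (n:ℝ) : ℂ))‖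
        ≤ P + 1 := le_trans hnorm hcard
      _ ≤ 12 * (A * P * Real.sqrt lam + 1 / Real.sqrt lam) := by nlinarith
end
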